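/- For any realizable interval sequence S = (A,B) and any levelled sequence C with A ≤ C ≤ B, at least one of the interval sequences (A,C) and (C,B) is realizable. -/

import Mathlib

open Finset

/-- A sequence is graphic if it is the degree sequence of a simple graph. -/
def IsGraphic {n : ℕ} (D : Fin n → ℕ) : Prop :=
  ∃ (G : SimpleGraph (Fin n)) (_ : DecidableRel G.Adj), ∀ i, G.degree i = D i

/-- The levelling operation: decrement entry `α` by 1, increment entry `β` by 1. -/
def lvl {n : ℕ} (D : Fin n → ℕ) (α β : Fin n) : Fin n → ℕ :=
  fun i => if i = α then D α - 1 else if i = β then D β + 1 else D i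

/-- The spread `φ(D) = ∑_{r<s} |d_r - d_s|`. -/
def spread {n : ℕ} (D : Fin n → ℕ) : ℤ :=
  ∑ r : Fin n, ∑ s : Fin n, if r < s then |(D r : ℤ) - (D s : ℤ)| else 0

/-- `A ≤ D ≤ B` coordinatewise. -/
def Between {n : ℕ} (A D B : Fin n → ℕ) : Prop := ∀ i, A i ≤ D i ∧ D i ≤ B i

/-- Volume of `D` w.r.t. lower boundary `A`. -/
def vol {n : ℕ} (A D : Fin n → ℕ) : ℕ := ∑ i, (D i - A i)

/-- An interval sequence `(A,B)` is realizable if it contains a graphic sequence. -/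
def Realizable {n : ℕ} (A B : Fin n → ℕ) : Prop := ∃ D, IsGraphic D ∧ Between A D B

/-- Two sequences are similar if one is a permutation of the other. -/
def SeqSimilar {n : ℕ} (D D' : Fin n → ℕ) : Prop :=
  ∃ σ : Equiv.Perm (Fin n), ∀ i, D' i = D (σ i)

/-- `D` is levelled w.r.t. `(A,B)`: it lies in `[A,B]` and no levelling operation staying
within `[A,B]` strictly decreases its spread. -/
def IsLevelled {n : ℕ} (A B D : Fin n → ℕ) : Prop :=
  Between A D B ∧ ∀ α β : Fin n, α ≠ β → D β < D α → Between A (lvl D α β) B →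
    spread D ≤ spread (lvl D α β)

/-- One levelling step from `D` to `D'` staying within `[A,B]`. -/
def LvlStep {n : ℕ} (A B D D' : Fin n → ℕ) : Prop :=
  ∃ α β : Fin n, α ≠ β ∧ D β < D α ∧ D' = lvl D α β ∧ Between A D' B

/-- `F(ℓ,S) = ∑_i (min(ℓ,b_i) - min(ℓ,a_i))`. -/
noncomputable def Fvol {n : ℕ} (A B : Fin n → ℕ) (ℓ : ℝ) : ℝ :=
  ∑ i, (min ℓ (B i : ℝ) - min ℓ (A i : ℝ))

/-- Upper deviation `δ_U(D,S) = ∑_i max(0, d_i - b_i)` (truncated subtraction). -/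
def devU {n : ℕ} (D B : Fin n → ℕ) : ℕ := ∑ i, (D i - B i)

/-- Lower deviation `δ_L(D,S) = ∑_i max(0, a_i - d_i)` (truncated subtraction). -/
def devL {n : ℕ} (D A : Fin n → ℕ) : ℕ := ∑ i, (A i - D i)

/-- `R` lies in `[B,⊤]`, `(A,R)` is realizable, and `∑ (r_i - b_i)` is minimum. -/
def MinUpper {n : ℕ} (A B R : Fin n → ℕ) : Prop :=
  (∀ i, B i ≤ R i ∧ R i ≤ n - 1) ∧ Realizable A R ∧
  ∀ R' : Fin n → ℕ, (∀ i, B i ≤ R' i ∧ R' i ≤ n - 1) → Realizable A R' →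
    ∑ i, (R i - B i) ≤ ∑ i, (R' i - B i)


section Aux

lemma exists_swap_vertex {n : ℕ} (G : SimpleGraph (Fin n)) [DecidableRel G.Adj]
    {α β : Fin n} (h : G.degree β < G.degree α) :
    ∃ v, G.Adj α v ∧ ¬ G.Adj β v ∧ v ≠ β := by
  by_contra hcon
  push_neg at hcon
  have hsub : (G.neighborFinset α).erase β ⊆ (G.neighborFinset β).erase α := by
    intro v hv
    rw [Finset.mem_erase, SimpleGraph.mem_neighborFinset] at hv
    obtain ⟨hvβ, hadj⟩ := hv
    have hβv : G.Adj β v := by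
      by_contra hno
      exact hvβ (hcon v hadj hno)
    rw [Finset.mem_erase, SimpleGraph.mem_neighborFinset]
    exact ⟨fun hva => G.loopless.irrefl α (hva ▸ hadj), hβv⟩
  have hcard := Finset.card_le_card hsub
  by_cases hab : G.Adj α β
  · rw [Finset.card_erase_of_mem (by rwa [SimpleGraph.mem_neighborFinset]),
        Finset.card_erase_of_mem (by rw [SimpleGraph.mem_neighborFinset]; exact hab.symm)] at hcard
    have hb1 : 0 < #(G.neighborFinset β) :=
      Finset.card_pos.2 ⟨α, by rw [SimpleGraph.mem_neighborFinset]; exact hab.symm⟩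
    simp only [SimpleGraph.degree] at h
    omega
  · rw [Finset.erase_eq_of_notMem (by rw [SimpleGraph.mem_neighborFinset]; exact hab),
        Finset.erase_eq_of_notMem (by rw [SimpleGraph.mem_neighborFinset]; exact fun hh => hab hh.symm)] at hcard
    simp only [SimpleGraph.degree] at h
    omega

lemma graphic_lvl {n : ℕ} {D : Fin n → ℕ} {α β : Fin n} (hne : α ≠ β)
    (hg : IsGraphic D) (hlt : D β < D α) : IsGraphic (lvl D α β) := by
  obtain ⟨G, hdec, hdeg⟩ := hg
  have hdegs : G.degree β < G.degree α := by rw [hdeg, hdeg]; exact hlt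
  obtain ⟨v, hav, hbv, hvβ⟩ := exists_swap_vertex G hdegs
  have hvα : v ≠ α := fun h => G.loopless.irrefl α (h ▸ hav)
  have hsymm : Symmetric (fun x y => (G.Adj x y ∧ ¬(x = α ∧ y = v) ∧ ¬(x = v ∧ y = α)) ∨
      (x = β ∧ y = v) ∨ (x = v ∧ y = β)) := by
    intro x y hxy
    rcases hxy with ⟨h1, h2, h3⟩ | ⟨h1, h2⟩ | ⟨h1, h2⟩
    · exact Or.inl ⟨h1.symm, fun ⟨a, b⟩ => h3 ⟨b, a⟩, fun ⟨a, b⟩ => h2 ⟨b, a⟩⟩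
    · exact Or.inr (Or.inr ⟨h2, h1⟩)
    · exact Or.inr (Or.inl ⟨h2, h1⟩)
  have hloop : ∀ x, ¬ ((G.Adj x x ∧ ¬(x = α ∧ x = v) ∧ ¬(x = v ∧ x = α)) ∨
      (x = β ∧ x = v) ∨ (x = v ∧ x = β)) := by
    intro x hx
    rcases hx with ⟨h1, _, _⟩ | ⟨h1, h2⟩ | ⟨h1, h2⟩
    · exact G.loopless.irrefl x h1
    · exact hvβ (h2 ▸ h1 ▸ rfl)
    · exact hvβ (h1 ▸ h2 ▸ rfl)
  set G' : SimpleGraph (Fin n) :=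
    { Adj := fun x y => (G.Adj x y ∧ ¬(x = α ∧ y = v) ∧ ¬(x = v ∧ y = α)) ∨
        (x = β ∧ y = v) ∨ (x = v ∧ y = β),
      symm := ⟨fun a b h => hsymm h⟩, loopless := ⟨hloop⟩ } with hG'
  haveI hdec' : DecidableRel G'.Adj := fun x y => by
    rw [hG']; dsimp only; infer_instance
  have hAdj : ∀ x y, G'.Adj x y ↔ ((G.Adj x y ∧ ¬(x = α ∧ y = v) ∧ ¬(x = v ∧ y = α)) ∨
      (x = β ∧ y = v) ∨ (x = v ∧ y = β)) := fun x y => Iff.rfl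
  refine ⟨G', hdec', fun i => ?_⟩
  have hNα : G'.neighborFinset α = (G.neighborFinset α).erase v := by
    ext y
    rw [SimpleGraph.mem_neighborFinset, Finset.mem_erase, SimpleGraph.mem_neighborFinset, hAdj]
    constructor
    · rintro (⟨h1, h2, h3⟩ | ⟨h1, h2⟩ | ⟨h1, h2⟩)
      · exact ⟨fun hyv => h2 ⟨rfl, hyv⟩, h1⟩
      · exact absurd h1 hne
      · exact absurd h1.symm hvα
    · rintro ⟨h1, h2⟩
      exact Or.inl ⟨h2, fun hp => h1 hp.2, fun hp => hvα hp.1.symm⟩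
  have hNβ : G'.neighborFinset β = insert v (G.neighborFinset β) := by
    ext y
    rw [SimpleGraph.mem_neighborFinset, Finset.mem_insert, SimpleGraph.mem_neighborFinset, hAdj]
    constructor
    · rintro (⟨h1, h2, h3⟩ | ⟨h1, h2⟩ | ⟨h1, h2⟩)
      · exact Or.inr h1
      · exact Or.inl h2
      · exact absurd h1.symm hvβ
    · rintro (rfl | h1)
      · exact Or.inr (Or.inl ⟨rfl, rfl⟩)
      · exact Or.inl ⟨h1, fun hp => hne hp.1.symm, fun hp => hvβ hp.1.symm⟩
  have hNv : G'.neighborFinset v = insert β ((G.neighborFinset v).erase α) := by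
    ext y
    rw [SimpleGraph.mem_neighborFinset, Finset.mem_insert, Finset.mem_erase,
      SimpleGraph.mem_neighborFinset, hAdj]
    constructor
    · rintro (⟨h1, h2, h3⟩ | ⟨h1, h2⟩ | ⟨h1, h2⟩)
      · exact Or.inr ⟨fun hyα => h3 ⟨rfl, hyα⟩, h1⟩
      · exact absurd h1 hvβ
      · exact Or.inl h2
    · rintro (rfl | ⟨h1, h2⟩)
      · exact Or.inr (Or.inr ⟨rfl, rfl⟩)
      · exact Or.inl ⟨h2, fun hp => hvα hp.1, fun hp => h1 hp.2⟩
  have hNo : ∀ x, x ≠ α → x ≠ β → x ≠ v → G'.neighborFinset x = G.neighborFinset x := by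
    intro x h1 h2 h3
    ext y
    rw [SimpleGraph.mem_neighborFinset, SimpleGraph.mem_neighborFinset, hAdj]
    constructor
    · rintro (⟨ha, _, _⟩ | ⟨ha, hb⟩ | ⟨ha, hb⟩)
      · exact ha
      · exact absurd ha h2
      · exact absurd ha h3
    · intro ha
      exact Or.inl ⟨ha, fun hp => h1 hp.1, fun hp => h3 hp.1⟩
  have hdegG' : ∀ x, G'.degree x = (G'.neighborFinset x).card := fun _ => rfl
  have hdegG : ∀ x, G.degree x = (G.neighborFinset x).card := fun _ => rfl
  rcases eq_or_ne i α with rfl | hiα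
  · rw [hdegG', hNα, Finset.card_erase_of_mem (by rw [SimpleGraph.mem_neighborFinset]; exact hav)]
    rw [← hdegG, hdeg]
    simp [lvl]
  · rcases eq_or_ne i β with rfl | hiβ
    · rw [hdegG', hNβ, Finset.card_insert_of_notMem
        (by rw [SimpleGraph.mem_neighborFinset]; exact hbv)]
      rw [← hdegG, hdeg]
      simp [lvl, hne.symm]
    · rcases eq_or_ne i v with hiv | hiv
      · rw [hiv]
        rw [hdegG', hNv, Finset.card_insert_of_notMem
          (by rw [Finset.mem_erase, SimpleGraph.mem_neighborFinset]
              exact fun hp => hbv (hp.2.symm))]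
        rw [Finset.card_erase_of_mem
          (by rw [SimpleGraph.mem_neighborFinset]; exact hav.symm)]
        have : 0 < (G.neighborFinset v).card :=
          Finset.card_pos.2 ⟨α, by rw [SimpleGraph.mem_neighborFinset]; exact hav.symm⟩
        rw [← hdegG] at this ⊢
        rw [hdeg] at this ⊢
        simp only [lvl, if_neg hvα, if_neg hvβ]
        omega
      · rw [hdegG', hNo i hiα hiβ hiv, ← hdegG, hdeg]
        simp [lvl, hiα, hiβ]

lemma spread_double {n : ℕ} (D : Fin n → ℕ) :
    2 * spread D = ∑ r : Fin n, ∑ s : Fin n, |(D r : ℤ) - (D s : ℤ)| := by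
  have hcomm : spread D
      = ∑ r : Fin n, ∑ s : Fin n, if s < r then |(D s : ℤ) - (D r : ℤ)| else 0 :=
    Finset.sum_comm
  rw [two_mul]
  nth_rewrite 2 [hcomm]
  rw [spread, ← Finset.sum_add_distrib]
  refine Finset.sum_congr rfl fun r _ => ?_
  rw [← Finset.sum_add_distrib]
  refine Finset.sum_congr rfl fun s _ => ?_
  rcases lt_trichotomy r s with h | h | h
  · rw [if_pos h, if_neg (asymm h), add_zero]
  · subst h; simp
  · rw [if_neg (asymm h), if_pos h, zero_add, abs_sub_comm]

lemma spread_lvl_lt {n : ℕ} {D : Fin n → ℕ} {α β : Fin n} (hne : α ≠ β)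
    (hgap : D β + 2 ≤ D α) : spread (lvl D α β) < spread D := by
  set D' := lvl D α β with hD'
  have hgap' : (D β : ℤ) + 2 ≤ (D α : ℤ) := by exact_mod_cast hgap
  have hα' : (D' α : ℤ) = (D α : ℤ) - 1 := by
    rw [hD']; simp only [lvl, if_pos rfl]
    have : 1 ≤ D α := by omega
    push_cast [this]; ring
  have hβ' : (D' β : ℤ) = (D β : ℤ) + 1 := by
    rw [hD']; simp only [lvl, if_neg (Ne.symm hne), if_pos rfl]
    push_cast; ring
  have ho : ∀ i, i ≠ α → i ≠ β → (D' i : ℤ) = (D i : ℤ) := by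
    intro i h1 h2
    rw [hD']; simp only [lvl, if_neg h1, if_neg h2]
  have keyL : ∀ x : ℤ, |((D α : ℤ) - 1) - x| + |((D β : ℤ) + 1) - x|
      ≤ |(D α : ℤ) - x| + |(D β : ℤ) - x| := by
    intro x
    rcases abs_cases (((D α : ℤ) - 1) - x) with ⟨e1, i1⟩ | ⟨e1, i1⟩ <;>
      rcases abs_cases (((D β : ℤ) + 1) - x) with ⟨e2, i2⟩ | ⟨e2, i2⟩ <;>
      rcases abs_cases ((D α : ℤ) - x) with ⟨e3, i3⟩ | ⟨e3, i3⟩ <;>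
      rcases abs_cases ((D β : ℤ) - x) with ⟨e4, i4⟩ | ⟨e4, i4⟩ <;>
      rw [e1, e2, e3, e4] <;> omega
  have keyR : ∀ x : ℤ, |x - ((D α : ℤ) - 1)| + |x - ((D β : ℤ) + 1)|
      ≤ |x - (D α : ℤ)| + |x - (D β : ℤ)| := by
    intro x
    rw [abs_sub_comm x, abs_sub_comm x, abs_sub_comm x, abs_sub_comm x]
    exact keyL x
  set P : Finset (Fin n) := Finset.univ \ {α, β} with hPdef
  have hP : ∀ i ∈ P, i ≠ α ∧ i ≠ β := by
    intro i hi
    rw [hPdef, Finset.mem_sdiff, Finset.mem_insert, Finset.mem_singleton] at hi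
    tauto
  have hsplit : ∀ f : Fin n → ℤ, ∑ r, f r = ∑ r ∈ P, f r + (f α + f β) := by
    intro f
    rw [← Finset.sum_sdiff (Finset.subset_univ ({α, β} : Finset (Fin n))),
      Finset.sum_pair hne]
  suffices h : (∑ r : Fin n, ∑ s : Fin n, |(D' r : ℤ) - (D' s : ℤ)|) + 2
      ≤ ∑ r : Fin n, ∑ s : Fin n, |(D r : ℤ) - (D s : ℤ)| by
    have h1 := spread_double D
    have h2 := spread_double D'
    linarith
  rw [hsplit (fun r => ∑ s : Fin n, |(D' r : ℤ) - (D' s : ℤ)|),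
      hsplit (fun r => ∑ s : Fin n, |(D r : ℤ) - (D s : ℤ)|)]
  have hPsum : ∑ r ∈ P, (∑ s : Fin n, |(D' r : ℤ) - (D' s : ℤ)|)
      ≤ ∑ r ∈ P, (∑ s : Fin n, |(D r : ℤ) - (D s : ℤ)|) := by
    refine Finset.sum_le_sum fun r hr => ?_
    obtain ⟨hrα, hrβ⟩ := hP r hr
    rw [hsplit (fun s => |(D' r : ℤ) - (D' s : ℤ)|),
        hsplit (fun s => |(D r : ℤ) - (D s : ℤ)|)]
    have hsum2 : ∑ s ∈ P, |(D' r : ℤ) - (D' s : ℤ)| = ∑ s ∈ P, |(D r : ℤ) - (D s : ℤ)| :=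
      Finset.sum_congr rfl fun s hs => by rw [ho r hrα hrβ, ho s (hP s hs).1 (hP s hs).2]
    rw [hsum2, hα', hβ', ho r hrα hrβ]
    have := keyR ((D r : ℤ))
    linarith
  have hIα : (∑ s : Fin n, |(D' α : ℤ) - (D' s : ℤ)|)
      = ∑ s ∈ P, |((D α : ℤ) - 1) - (D s : ℤ)| + (0 + |((D α : ℤ) - 1) - ((D β : ℤ) + 1)|) := by
    rw [hsplit (fun s => |(D' α : ℤ) - (D' s : ℤ)|)]
    congr 1
    · exact Finset.sum_congr rfl fun s hs => by rw [hα', ho s (hP s hs).1 (hP s hs).2]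
    · rw [hα', hβ']; simp
  have hIβ : (∑ s : Fin n, |(D' β : ℤ) - (D' s : ℤ)|)
      = ∑ s ∈ P, |((D β : ℤ) + 1) - (D s : ℤ)| + (|((D β : ℤ) + 1) - ((D α : ℤ) - 1)| + 0) := by
    rw [hsplit (fun s => |(D' β : ℤ) - (D' s : ℤ)|)]
    congr 1
    · exact Finset.sum_congr rfl fun s hs => by rw [hβ', ho s (hP s hs).1 (hP s hs).2]
    · rw [hα', hβ']; simp
  have hJα : (∑ s : Fin n, |(D α : ℤ) - (D s : ℤ)|)
      = ∑ s ∈ P, |(D α : ℤ) - (D s : ℤ)| + (0 + |(D α : ℤ) - (D β : ℤ)|) := by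
    rw [hsplit (fun s => |(D α : ℤ) - (D s : ℤ)|)]; simp
  have hJβ : (∑ s : Fin n, |(D β : ℤ) - (D s : ℤ)|)
      = ∑ s ∈ P, |(D β : ℤ) - (D s : ℤ)| + (|(D β : ℤ) - (D α : ℤ)| + 0) := by
    rw [hsplit (fun s => |(D β : ℤ) - (D s : ℤ)|)]; simp
  have hPsum2 : ∑ s ∈ P, |((D α : ℤ) - 1) - (D s : ℤ)| + ∑ s ∈ P, |((D β : ℤ) + 1) - (D s : ℤ)|
      ≤ ∑ s ∈ P, |(D α : ℤ) - (D s : ℤ)| + ∑ s ∈ P, |(D β : ℤ) - (D s : ℤ)| := by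
    rw [← Finset.sum_add_distrib, ← Finset.sum_add_distrib]
    exact Finset.sum_le_sum fun s _ => keyL ((D s : ℤ))
  have hcross1 : |((D α : ℤ) - 1) - ((D β : ℤ) + 1)| + 1 ≤ |(D α : ℤ) - (D β : ℤ)| := by
    rcases abs_cases (((D α : ℤ) - 1) - ((D β : ℤ) + 1)) with ⟨e1, i1⟩ | ⟨e1, i1⟩ <;>
      rcases abs_cases ((D α : ℤ) - (D β : ℤ)) with ⟨e2, i2⟩ | ⟨e2, i2⟩ <;>
      rw [e1, e2] <;> omega
  have hcross2 : |((D β : ℤ) + 1) - ((D α : ℤ) - 1)| + 1 ≤ |(D β : ℤ) - (D α : ℤ)| := by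
    rw [abs_sub_comm, abs_sub_comm (D β : ℤ)]
    exact hcross1
  rw [hIα, hIβ, hJα, hJβ]
  linarith

end Aux

theorem stmt_11 {n : ℕ} (A B C : Fin n → ℕ)
    (hS : ∀ i, A i ≤ B i ∧ B i ≤ n - 1)
    (hR : Realizable A B) (hC : IsLevelled A B C) :
    Realizable A C ∨ Realizable C B := by
  obtain ⟨hCb, hClev⟩ := hC
  obtain ⟨D0, hg0, hb0⟩ := hR
  suffices H : ∀ m : ℕ, ∀ D : Fin n → ℕ, IsGraphic D → Between A D B →
      (∑ i, ((D i - C i) + (C i - D i))) = m → Realizable A C ∨ Realizable C B by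
    exact H _ D0 hg0 hb0 rfl
  intro m
  induction m using Nat.strong_induction_on with
  | _ m IH =>
    intro D hg hb hm
    by_cases h1 : ∀ i, D i ≤ C i
    · exact Or.inl ⟨D, hg, fun i => ⟨(hb i).1, h1 i⟩⟩
    by_cases h2 : ∀ i, C i ≤ D i
    · exact Or.inr ⟨D, hg, fun i => ⟨h2 i, (hb i).2⟩⟩
    push_neg at h1 h2
    obtain ⟨i, hi⟩ := h1
    obtain ⟨j, hj⟩ := h2
    have hij : i ≠ j := fun h => by rw [h] at hi; omega
    by_cases hcase : D j < D i
    · set D' := lvl D i j with hD'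
      have hg' : IsGraphic D' := graphic_lvl hij hg hcase
      have hb' : Between A D' B := by
        intro k
        rw [hD']; simp only [lvl]
        rcases eq_or_ne k i with hki | hki
        · rw [if_pos hki]; subst hki
          have h1 := hb k; have h2 := hCb k; omega
        · rw [if_neg hki]
          rcases eq_or_ne k j with hkj | hkj
          · rw [if_pos hkj]; subst hkj
            have h1 := hb k; have h2 := hCb k; omega
          · rw [if_neg hkj]; exact hb k
      have hlt : (∑ k, ((D' k - C k) + (C k - D' k))) < m := by
        rw [← hm]
        refine Finset.sum_lt_sum (fun k _ => ?_) ⟨i, Finset.mem_univ i, ?_⟩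
        · rw [hD']; simp only [lvl]
          rcases eq_or_ne k i with hki | hki
          · rw [if_pos hki]; subst hki; omega
          · rw [if_neg hki]
            rcases eq_or_ne k j with hkj | hkj
            · rw [if_pos hkj]; subst hkj; omega
            · rw [if_neg hkj]
        · have hval : lvl D i j i = D i - 1 := by simp [lvl]
          rw [hD', hval]; omega
      exact IH _ hlt D' hg' hb' rfl
    · exfalso
      push_neg at hcase
      have hgap : C i + 2 ≤ C j := by omega
      have hbet : Between A (lvl C j i) B := by
        intro k
        simp only [lvl]
        rcases eq_or_ne k j with hkj | hkj
        · rw [if_pos hkj]; subst hkj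
          have h1 := hb k; have h2 := hCb k; omega
        · rw [if_neg hkj]
          rcases eq_or_ne k i with hki | hki
          · rw [if_pos hki]; subst hki
            have h1 := hb k; have h2 := hCb k; omega
          · rw [if_neg hki]; exact hCb k
      have hmono := hClev j i (Ne.symm hij) (by omega) hbet
      have hdec := spread_lvl_lt (Ne.symm hij) hgap
      linarith
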